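/- Given a fixed action profile in which all informed agents' diffusion choices are fixed, for any informed buyer j, the set of diffusion critical nodes of j together with j itself is totally ordered by the relation d_x ⊃ d_y (strict reverse inclusion of the corresponding dependent sets); i.e., for any two distinct diffusion critical nodes x, y of j, either d_x ⊃ d_y or d_y ⊃ d_x. -/

import Mathlib

/-- A diffusion path from the seller `s` to agent `j`: a nonempty list starting at `s`,
ending at `j`, in which each agent passes the information to the next one
(i.e. the next agent belongs to the diffusion set of the previous one). -/
def IsDiffPath {N : Type} (σ : N → Finset N) (s j : N) (p : List N) : Prop :=
  p ≠ [] ∧ p.head? = some s ∧ p.getLast? = some j ∧ List.Chain' (fun a b => b ∈ σ a) p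

/-- Agent `j` is informed if some diffusion path from the seller reaches her. -/
def Informed {N : Type} (σ : N → Finset N) (s j : N) : Prop :=
  ∃ p, IsDiffPath σ s j p

/-- Buyer `i` is a diffusion critical node of buyer `j`: `j` is informed and every
diffusion path from the seller `s` to `j` passes through `i` (and `i ≠ j`). -/
def Critical {N : Type} (σ : N → Finset N) (s i j : N) : Prop :=
  i ≠ j ∧ Informed σ s j ∧ ∀ p, IsDiffPath σ s j p → i ∈ p

/-- `d_i`: buyer `i` together with all buyers having `i` as a diffusion critical node. -/
def dset {N : Type} (σ : N → Finset N) (s i : N) : Set N :=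
  {i} ∪ {j | Critical σ s i j}

open List in
lemma exists_last_occ {α : Type} (x : α) :
    ∀ (p : List α), x ∈ p → ∃ a b, p = a ++ x :: b ∧ x ∉ b := by
  intro p hp
  induction p with
  | nil => simp at hp
  | cons h t ih =>
    by_cases hx : x ∈ t
    · obtain ⟨a, b, rfl, hb⟩ := ih hx
      exact ⟨h :: a, b, rfl, hb⟩
    · rcases List.mem_cons.mp hp with rfl | h'
      · exact ⟨[], t, rfl, hx⟩
      · exact absurd h' hx

lemma path_prefix {N : Type} (σ : N → Finset N) (s j x : N) (a b : List N)
    (h : IsDiffPath σ s j (a ++ x :: b)) : IsDiffPath σ s x (a ++ [x]) := by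
  obtain ⟨-, hh, -, hc⟩ := h
  refine ⟨by simp, ?_, by simp, ?_⟩
  · cases a <;> simpa using hh
  · exact hc.prefix ⟨b, by simp⟩

lemma path_nonnil_suffix {N : Type} (σ : N → Finset N) (s j x : N) (a b : List N)
    (h : IsDiffPath σ s j (a ++ x :: b)) (hne : x ≠ j) : b ≠ [] := by
  rintro rfl
  obtain ⟨-, -, hl, -⟩ := h
  rw [List.getLast?_append_of_ne_nil _ (by simp)] at hl
  simp at hl
  exact hne hl

lemma path_concat {N : Type} (σ : N → Finset N) (s j x : N) (a b q : List N)
    (hp : IsDiffPath σ s j (a ++ x :: b)) (hb : b ≠ [])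
    (hq : IsDiffPath σ s x q) : IsDiffPath σ s j (q ++ b) := by
  obtain ⟨hpne, hph, hpl, hpc⟩ := hp
  obtain ⟨hqne, hqh, hql, hqc⟩ := hq
  have hsuf : List.Chain' (fun a b => b ∈ σ a) (x :: b) := hpc.suffix ⟨a, rfl⟩
  refine ⟨by simp [hqne], ?_, ?_, ?_⟩
  · cases q with
    | nil => exact absurd rfl hqne
    | cons h t => simpa using hqh
  · rw [List.getLast?_append_of_ne_nil _ hb]
    rw [List.getLast?_append_of_ne_nil _ (by simp), show x :: b = [x] ++ b from rfl,
      List.getLast?_append_of_ne_nil _ hb] at hpl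
    exact hpl
  · show List.IsChain _ (q ++ b); rw [List.isChain_append]
    refine ⟨hqc, hsuf.tail, ?_⟩
    intro u hu v hv
    rw [hql] at hu
    simp at hu
    subst hu
    rcases List.isChain_cons.mp hsuf with ⟨h1, -⟩
    exact h1 v hv

lemma not_crit_both {N : Type} (σ : N → Finset N) (s x y : N)
    (hxy : Critical σ s x y) (hyx : Critical σ s y x) : False := by
  have hne := hxy.1
  obtain ⟨p0, hp0⟩ := hxy.2.1
  have key : ∀ n, ∀ p : List N, p.length = n → IsDiffPath σ s y p → False := by
    intro n
    induction n using Nat.strong_induction_on with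
    | _ n ih =>
      intro p hlen hp
      have hxp : x ∈ p := hxy.2.2 p hp
      obtain ⟨a, b, rfl, -⟩ := exists_last_occ x _ hxp
      have hq : IsDiffPath σ s x (a ++ [x]) := path_prefix σ s y x a b hp
      have hbne : b ≠ [] := path_nonnil_suffix σ s y x a b hp hne
      have hyq : y ∈ a ++ [x] := hyx.2.2 _ hq
      have hya : y ∈ a := by
        rcases List.mem_append.mp hyq with h | h
        · exact h
        · simp at h; exact absurd h.symm hne
      obtain ⟨c, d, hcd, -⟩ := exists_last_occ y a hya
      have hq' : IsDiffPath σ s x (c ++ y :: (d ++ [x])) := by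
        rw [hcd] at hq; simpa using hq
      have hr : IsDiffPath σ s y (c ++ [y]) := path_prefix σ s x y c (d ++ [x]) hq'
      have hlt : (c ++ [y]).length < n := by
        have h1 : a.length = c.length + d.length + 1 := by rw [hcd]; simp; omega
        have h2 : (a ++ x :: b).length = a.length + b.length + 1 := by simp; omega
        have h3 : b.length ≥ 1 := List.length_pos_iff.mpr hbne
        simp only [List.length_append, List.length_singleton]
        omega
      exact ih _ hlt _ rfl hr
  exact key p0.length p0 rfl hp0

lemma crit_step {N : Type} {σ : N → Finset N} {s x y z : N}
    (hxy : Critical σ s x y) (hyz : Critical σ s y z) : Critical σ s x z := by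
  refine ⟨?_, hyz.2.1, ?_⟩
  · rintro rfl
    exact not_crit_both σ s x y hxy hyz
  · intro p hp
    have hyp : y ∈ p := hyz.2.2 p hp
    obtain ⟨a, b, rfl⟩ := List.append_of_mem hyp
    have hq : IsDiffPath σ s y (a ++ [y]) := path_prefix σ s z y a b hp
    have hxq : x ∈ a ++ [y] := hxy.2.2 _ hq
    rcases List.mem_append.mp hxq with h | h
    · exact List.mem_append.mpr (Or.inl h)
    · simp at h; subst h; exact List.mem_append.mpr (Or.inr List.mem_cons_self)

lemma dset_ssubset {N : Type} {σ : N → Finset N} {s x y : N}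
    (h : Critical σ s x y) : dset σ s y ⊂ dset σ s x := by
  rw [Set.ssubset_def]
  constructor
  · intro z hz
    rcases hz with hz | hz
    · rw [Set.mem_singleton_iff] at hz
      subst hz
      exact Or.inr h
    · exact Or.inr (crit_step h hz)
  · intro hc
    have hx : x ∈ dset σ s y := hc (Or.inl rfl)
    rcases hx with hx | hx
    · rw [Set.mem_singleton_iff] at hx
      exact h.1 hx
    · exact not_crit_both σ s x y h hx

/-- for any informed buyer `j`, any two distinct diffusion critical nodes
`x, y` of `j` are comparable: either `d_x ⊃ d_y` or `d_y ⊃ d_x` (strict inclusion of the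
dependent sets).  Hence the diffusion critical nodes of `j`, together with `j`, form a
sequence totally ordered by strict reverse inclusion of their dependent sets. -/
theorem critical_sequence_totally_ordered {N : Type}
    (σ : N → Finset N) (s j x y : N)
    (hj : Informed σ s j)
    (hx : Critical σ s x j) (hy : Critical σ s y j) (hxy : x ≠ y) :
    dset σ s y ⊂ dset σ s x ∨ dset σ s x ⊂ dset σ s y := by
  obtain ⟨p, hp⟩ := hj
  have hxp : x ∈ p := hx.2.2 p hp
  obtain ⟨a, b, rfl, hxb⟩ := exists_last_occ x p hxp
  have hbne : b ≠ [] := path_nonnil_suffix σ s j x a b hp hx.1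
  by_cases hyb : y ∈ b
  · -- last occurrence of y in b : x is critical for y
    left
    obtain ⟨c, d, rfl, hyd⟩ := exists_last_occ y b hyb
    have hp' : IsDiffPath σ s j ((a ++ x :: c) ++ y :: d) := by simpa using hp
    have hdne : d ≠ [] := path_nonnil_suffix σ s j y (a ++ x :: c) d hp' hy.1
    have hcrit : Critical σ s x y := by
      refine ⟨hxy, ⟨(a ++ x :: c) ++ [y], path_prefix σ s j y _ d hp'⟩, ?_⟩
      intro q hq
      have hpath : IsDiffPath σ s j (q ++ d) :=
        path_concat σ s j y (a ++ x :: c) d q hp' hdne hq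
      have hxqd : x ∈ q ++ d := hx.2.2 _ hpath
      rcases List.mem_append.mp hxqd with h | h
      · exact h
      · exact absurd h (fun hh => hxb (by simp [List.mem_append]; exact Or.inr (Or.inr hh)))
    exact dset_ssubset hcrit
  · -- y is critical for x
    right
    have hcrit : Critical σ s y x := by
      refine ⟨hxy.symm, ⟨a ++ [x], path_prefix σ s j x a b hp⟩, ?_⟩
      intro q hq
      have hpath : IsDiffPath σ s j (q ++ b) :=
        path_concat σ s j x a b q hp hbne hq
      have hyqb : y ∈ q ++ b := hy.2.2 _ hpath
      rcases List.mem_append.mp hyqb with h | h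
      · exact h
      · exact absurd h hyb
    exact dset_ssubset hcrit
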